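/- Let V be a unital algebra with algebra map Δ: V → V⊗V and invertible R ∈ V⊗V satisfying Δ^{op}(v) = R·Δ(v)·R⁻¹ for all v and the triangularity R₂₁·R = 1. If Φ ∈ V^{⊗3} is invertible, satisfies the first hexagon identity (Δ⊗1)(R) = Φ₃₁₂·R₁₃·Φ₁₃₂⁻¹·R₂₃·Φ, then the second hexagon identity (1⊗Δ)(R) = Φ₂₃₁⁻¹·R₁₃·Φ₂₁₃·R₁₂·Φ⁻¹ holds. -/

import Mathlib

open scoped TensorProduct

noncomputable section

variable (k V : Type*) [Field k] [Ring V] [Algebra k V]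

/-- Swap of the first two tensor factors of `V^⊗3`: `a⊗b⊗c ↦ b⊗a⊗c`. -/
def swap12 : V ⊗[k] (V ⊗[k] V) ≃ₐ[k] V ⊗[k] (V ⊗[k] V) :=
  ((Algebra.TensorProduct.assoc k k k V V V).symm.trans
    (Algebra.TensorProduct.congr (Algebra.TensorProduct.comm k V V) AlgEquiv.refl)).trans
    (Algebra.TensorProduct.assoc k k k V V V)

/-- Swap of the last two tensor factors of `V^⊗3`: `a⊗b⊗c ↦ a⊗c⊗b`. -/
def swap23 : V ⊗[k] (V ⊗[k] V) ≃ₐ[k] V ⊗[k] (V ⊗[k] V) :=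
  Algebra.TensorProduct.congr AlgEquiv.refl (Algebra.TensorProduct.comm k V V)

/-- `X ↦ X₂₁₃` (component `j` of `X` is put in slot `i_j`): `a⊗b⊗c ↦ b⊗a⊗c`. -/
def perm213 : V ⊗[k] (V ⊗[k] V) ≃ₐ[k] V ⊗[k] (V ⊗[k] V) := swap12 k V

/-- `X ↦ X₁₃₂`: `a⊗b⊗c ↦ a⊗c⊗b`. -/
def perm132 : V ⊗[k] (V ⊗[k] V) ≃ₐ[k] V ⊗[k] (V ⊗[k] V) := swap23 k V

/-- `X ↦ X₂₃₁`: `a⊗b⊗c ↦ c⊗a⊗b`. -/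
def perm231 : V ⊗[k] (V ⊗[k] V) ≃ₐ[k] V ⊗[k] (V ⊗[k] V) := (swap23 k V).trans (swap12 k V)

/-- `X ↦ X₃₁₂`: `a⊗b⊗c ↦ b⊗c⊗a`. -/
def perm312 : V ⊗[k] (V ⊗[k] V) ≃ₐ[k] V ⊗[k] (V ⊗[k] V) := (swap12 k V).trans (swap23 k V)

/-- `R ↦ R₁₂ : V^⊗2 → V^⊗3`, `a⊗b ↦ a⊗b⊗1`. -/
def emb12 : V ⊗[k] V →ₐ[k] V ⊗[k] (V ⊗[k] V) :=
  Algebra.TensorProduct.map (AlgHom.id k V)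
    (Algebra.TensorProduct.includeLeft : V →ₐ[k] V ⊗[k] V)

/-- `R ↦ R₁₃ : V^⊗2 → V^⊗3`, `a⊗b ↦ a⊗1⊗b`. -/
def emb13 : V ⊗[k] V →ₐ[k] V ⊗[k] (V ⊗[k] V) :=
  Algebra.TensorProduct.map (AlgHom.id k V)
    (Algebra.TensorProduct.includeRight : V →ₐ[k] V ⊗[k] V)

/-- `R ↦ R₂₃ : V^⊗2 → V^⊗3`, `a⊗b ↦ 1⊗a⊗b`. -/
def emb23 : V ⊗[k] V →ₐ[k] V ⊗[k] (V ⊗[k] V) :=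
  Algebra.TensorProduct.includeRight

/-- `Δ ⊗ 1 : V^⊗2 → V^⊗3`. -/
def deltaLeft (Δ : V →ₐ[k] V ⊗[k] V) : V ⊗[k] V →ₐ[k] V ⊗[k] (V ⊗[k] V) :=
  (Algebra.TensorProduct.assoc k k k V V V).toAlgHom.comp
    (Algebra.TensorProduct.map Δ (AlgHom.id k V))

/-- `1 ⊗ Δ : V^⊗2 → V^⊗3`. -/
def deltaRight (Δ : V →ₐ[k] V ⊗[k] V) : V ⊗[k] V →ₐ[k] V ⊗[k] (V ⊗[k] V) :=
  Algebra.TensorProduct.map (AlgHom.id k V) Δ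

/-! ### Auxiliary material -/

/-- total reversal `a⊗b⊗c ↦ c⊗b⊗a` -/
def rev3 : V ⊗[k] (V ⊗[k] V) ≃ₐ[k] V ⊗[k] (V ⊗[k] V) :=
  (swap23 k V).trans ((swap12 k V).trans (swap23 k V))

variable {k V}

lemma swap12_tmul (a b c : V) : swap12 k V (a ⊗ₜ (b ⊗ₜ c)) = b ⊗ₜ (a ⊗ₜ c) := by
  simp [swap12]

lemma swap23_tmul (a b c : V) : swap23 k V (a ⊗ₜ (b ⊗ₜ c)) = a ⊗ₜ (c ⊗ₜ b) := by
  simp [swap23]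

lemma rev3_tmul (a b c : V) : rev3 k V (a ⊗ₜ (b ⊗ₜ c)) = c ⊗ₜ (b ⊗ₜ a) := by
  simp [rev3, swap12_tmul, swap23_tmul]

lemma perm132_tmul (a b c : V) : perm132 k V (a ⊗ₜ (b ⊗ₜ c)) = a ⊗ₜ (c ⊗ₜ b) :=
  swap23_tmul a b c

lemma perm231_tmul (a b c : V) : perm231 k V (a ⊗ₜ (b ⊗ₜ c)) = c ⊗ₜ (a ⊗ₜ b) := by
  simp [perm231, swap12_tmul, swap23_tmul]

lemma perm312_tmul (a b c : V) : perm312 k V (a ⊗ₜ (b ⊗ₜ c)) = b ⊗ₜ (c ⊗ₜ a) := by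
  simp [perm312, swap12_tmul, swap23_tmul]

lemma emb12_tmul (a b : V) : emb12 k V (a ⊗ₜ b) = a ⊗ₜ (b ⊗ₜ (1 : V)) := rfl
lemma emb13_tmul (a b : V) : emb13 k V (a ⊗ₜ b) = a ⊗ₜ ((1 : V) ⊗ₜ b) := rfl
lemma emb23_tmul (a b : V) : emb23 k V (a ⊗ₜ b) = (1 : V) ⊗ₜ (a ⊗ₜ b) := rfl

/-- Two algebra equivalences of the triple tensor product agreeing on pure tensors
agree everywhere. -/
lemma triple_agree (e₁ e₂ : V ⊗[k] (V ⊗[k] V) ≃ₐ[k] V ⊗[k] (V ⊗[k] V))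
    (h : ∀ a b c : V, e₁ (a ⊗ₜ (b ⊗ₜ c)) = e₂ (a ⊗ₜ (b ⊗ₜ c)))
    (X : V ⊗[k] (V ⊗[k] V)) : e₁ X = e₂ X := by
  induction X using TensorProduct.induction_on with
  | zero => simp
  | add x y hx hy => simp [map_add, hx, hy]
  | tmul a y =>
    induction y using TensorProduct.induction_on with
    | zero => simp [TensorProduct.tmul_zero]
    | add u v hu hv => simp only [TensorProduct.tmul_add, map_add, hu, hv]
    | tmul b c => exact h a b c

lemma swap12_perm312 (X : V ⊗[k] (V ⊗[k] V)) :
    swap12 k V (perm312 k V X) = rev3 k V X :=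
  triple_agree ((perm312 k V).trans (swap12 k V)) (rev3 k V)
    (fun a b c => by simp [AlgEquiv.trans_apply, perm312_tmul, swap12_tmul, rev3_tmul]) X

lemma swap12_perm132 (X : V ⊗[k] (V ⊗[k] V)) :
    swap12 k V (perm132 k V X) = perm231 k V X :=
  triple_agree ((perm132 k V).trans (swap12 k V)) (perm231 k V)
    (fun a b c => by simp [AlgEquiv.trans_apply, perm132_tmul, swap12_tmul, perm231_tmul]) X

lemma rev3_perm312 (X : V ⊗[k] (V ⊗[k] V)) :
    rev3 k V (perm312 k V X) = perm132 k V X :=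
  triple_agree ((perm312 k V).trans (rev3 k V)) (perm132 k V)
    (fun a b c => by simp [AlgEquiv.trans_apply, perm312_tmul, rev3_tmul, perm132_tmul]) X

lemma rev3_perm132 (X : V ⊗[k] (V ⊗[k] V)) :
    rev3 k V (perm132 k V X) = perm312 k V X :=
  triple_agree ((perm132 k V).trans (rev3 k V)) (perm312 k V)
    (fun a b c => by simp [AlgEquiv.trans_apply, perm132_tmul, rev3_tmul, perm312_tmul]) X

/-- Two algebra maps out of `V ⊗ V` agreeing on pure tensors agree everywhere. -/
lemma pair_agree (f g : V ⊗[k] V →ₐ[k] V ⊗[k] (V ⊗[k] V))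
    (h : ∀ a b : V, f (a ⊗ₜ b) = g (a ⊗ₜ b)) (z : V ⊗[k] V) : f z = g z := by
  induction z using TensorProduct.induction_on with
  | zero => simp
  | add x y hx hy => simp [map_add, hx, hy]
  | tmul a b => exact h a b

lemma swap12_emb13 (z : V ⊗[k] V) : swap12 k V (emb13 k V z) = emb23 k V z :=
  pair_agree ((swap12 k V).toAlgHom.comp (emb13 k V)) (emb23 k V)
    (fun a b => by simp [emb13_tmul, emb23_tmul, swap12_tmul]) z

lemma swap12_emb23 (z : V ⊗[k] V) : swap12 k V (emb23 k V z) = emb13 k V z :=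
  pair_agree ((swap12 k V).toAlgHom.comp (emb23 k V)) (emb13 k V)
    (fun a b => by simp [emb13_tmul, emb23_tmul, swap12_tmul]) z

lemma rev3_emb13 (z : V ⊗[k] V) :
    rev3 k V (emb13 k V z) = emb13 k V (Algebra.TensorProduct.comm k V V z) :=
  pair_agree ((rev3 k V).toAlgHom.comp (emb13 k V))
    ((emb13 k V).comp (Algebra.TensorProduct.comm k V V).toAlgHom)
    (fun a b => by simp [emb13_tmul, rev3_tmul]) z

lemma rev3_emb23 (z : V ⊗[k] V) :
    rev3 k V (emb23 k V z) = emb12 k V (Algebra.TensorProduct.comm k V V z) :=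
  pair_agree ((rev3 k V).toAlgHom.comp (emb23 k V))
    ((emb12 k V).comp (Algebra.TensorProduct.comm k V V).toAlgHom)
    (fun a b => by simp [emb23_tmul, emb12_tmul, rev3_tmul]) z

lemma assoc_tmul_one (z : V ⊗[k] V) :
    Algebra.TensorProduct.assoc k k k V V V (z ⊗ₜ (1 : V)) = emb12 k V z := by
  induction z using TensorProduct.induction_on with
  | zero => simp [TensorProduct.zero_tmul]
  | add x y hx hy => simp only [TensorProduct.add_tmul, map_add, hx, hy]
  | tmul a b => simp [emb12_tmul]

lemma deltaLeft_tmul (Δ : V →ₐ[k] V ⊗[k] V) (a b : V) :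
    deltaLeft k V Δ (a ⊗ₜ b) = Algebra.TensorProduct.assoc k k k V V V (Δ a ⊗ₜ b) := by
  simp [deltaLeft]

lemma deltaRight_tmul (Δ : V →ₐ[k] V ⊗[k] V) (a b : V) :
    deltaRight k V Δ (a ⊗ₜ b) = a ⊗ₜ Δ b := rfl

lemma swap12_assoc (w : V ⊗[k] V) (b : V) :
    swap12 k V (Algebra.TensorProduct.assoc k k k V V V (w ⊗ₜ b)) =
      Algebra.TensorProduct.assoc k k k V V V ((Algebra.TensorProduct.comm k V V w) ⊗ₜ b) := by
  induction w using TensorProduct.induction_on with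
  | zero => simp [TensorProduct.zero_tmul]
  | add x y hx hy => simp only [TensorProduct.add_tmul, map_add, hx, hy]
  | tmul x y => simp [swap12_tmul]

lemma rev3_assoc (w : V ⊗[k] V) (b : V) :
    rev3 k V (Algebra.TensorProduct.assoc k k k V V V (w ⊗ₜ b)) =
      b ⊗ₜ (Algebra.TensorProduct.comm k V V w) := by
  induction w using TensorProduct.induction_on with
  | zero => simp [TensorProduct.zero_tmul, TensorProduct.tmul_zero]
  | add x y hx hy =>
    simp only [TensorProduct.add_tmul, map_add, hx, hy, TensorProduct.tmul_add]
  | tmul x y => simp [rev3_tmul]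

lemma mul_cancel_left' {M : Type*} [Monoid M] {a b : M} (h : a * b = 1) (t : M) :
    a * (b * t) = t := by rw [← mul_assoc, h, one_mul]

lemma conj_eq' {M : Type*} [Monoid M] {u v x y : M} (hv : v * u = 1)
    (h : u * x * v = y) : x = v * y * u := by
  subst h
  have h2 : v * (u * x * v) * u = (v * u) * (x * (v * u)) := by simp only [mul_assoc]
  rw [h2, hv, one_mul, mul_one]

section Conj

variable (Δ : V →ₐ[k] V ⊗[k] V) (R Rinv : V ⊗[k] V)
  (hop : ∀ v : V, Algebra.TensorProduct.comm k V V (Δ v) = R * Δ v * Rinv)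

include hop in
/-- Quasi-commutativity in the first two legs of `V^⊗3`. -/
lemma swap12_deltaLeft (x : V ⊗[k] V) :
    swap12 k V (deltaLeft k V Δ x) =
      emb12 k V R * deltaLeft k V Δ x * emb12 k V Rinv := by
  induction x using TensorProduct.induction_on with
  | zero => simp
  | add x y hx hy => simp only [map_add, hx, hy, mul_add, add_mul]
  | tmul a b =>
    rw [deltaLeft_tmul, swap12_assoc, hop a]
    have h1 : (R * Δ a * Rinv) ⊗ₜ[k] b =
        (R ⊗ₜ[k] (1 : V)) * ((Δ a) ⊗ₜ[k] b) * (Rinv ⊗ₜ[k] (1 : V)) := by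
      simp [Algebra.TensorProduct.tmul_mul_tmul]
    rw [h1, map_mul, map_mul, assoc_tmul_one, assoc_tmul_one]

include hop in
/-- Reversal of `Δ⊗1` gives a conjugate of `1⊗Δ`. -/
lemma rev3_deltaLeft (x : V ⊗[k] V) :
    rev3 k V (deltaLeft k V Δ x) =
      emb23 k V R * deltaRight k V Δ (Algebra.TensorProduct.comm k V V x) *
        emb23 k V Rinv := by
  induction x using TensorProduct.induction_on with
  | zero => simp
  | add x y hx hy => simp only [map_add, hx, hy, mul_add, add_mul]
  | tmul a b =>
    rw [deltaLeft_tmul, rev3_assoc, hop a, Algebra.TensorProduct.comm_tmul,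
      deltaRight_tmul]
    have h1 : emb23 k V R = (1 : V) ⊗ₜ[k] R := rfl
    have h2 : emb23 k V Rinv = (1 : V) ⊗ₜ[k] Rinv := rfl
    rw [h1, h2]
    simp [Algebra.TensorProduct.tmul_mul_tmul]

end Conj

set_option maxHeartbeats 2000000 in
/-- Let `V` be a unital algebra with an algebra map `Δ : V → V⊗V` and an
invertible `R ∈ V⊗V` satisfying `Δᵒᵖ(v) = R·Δ(v)·R⁻¹` and the triangularity
`R₂₁·R = 1`.  If `Φ ∈ V^⊗3` is invertible and satisfies the first hexagon
identity `(Δ⊗1)(R) = Φ₃₁₂·R₁₃·Φ₁₃₂⁻¹·R₂₃·Φ`, then the second hexagon identity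
`(1⊗Δ)(R) = Φ₂₃₁⁻¹·R₁₃·Φ₂₁₃·R₁₂·Φ⁻¹` holds. -/
theorem second_hexagon_of_first (Δ : V →ₐ[k] V ⊗[k] V)
    (R Rinv : V ⊗[k] V) (Φ Ψ : V ⊗[k] (V ⊗[k] V))
    (hR : R * Rinv = 1) (hR' : Rinv * R = 1)
    (hΦ : Φ * Ψ = 1) (hΨ : Ψ * Φ = 1)
    (hop : ∀ v : V, Algebra.TensorProduct.comm k V V (Δ v) = R * Δ v * Rinv)
    (htri : Algebra.TensorProduct.comm k V V R * R = 1)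
    (hhex1 : deltaLeft k V Δ R =
      perm312 k V Φ * emb13 k V R * perm132 k V Ψ * emb23 k V R * Φ) :
    deltaRight k V Δ R =
      perm231 k V Ψ * emb13 k V R * perm213 k V Φ * emb12 k V R * Ψ := by
  -- `R₂₁ = R⁻¹`
  have hσR : Algebra.TensorProduct.comm k V V R = Rinv := by
    have h1 : Algebra.TensorProduct.comm k V V R * (R * Rinv) =
        (Algebra.TensorProduct.comm k V V R * R) * Rinv := (mul_assoc _ _ _).symm
    rw [hR, mul_one, htri, one_mul] at h1
    exact h1
  -- cancellation facts
  have e12c : emb12 k V Rinv * emb12 k V R = 1 := by rw [← map_mul, hR', map_one]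
  have e13c : emb13 k V Rinv * emb13 k V R = 1 := by rw [← map_mul, hR', map_one]
  have e23c : emb23 k V Rinv * emb23 k V R = 1 := by rw [← map_mul, hR', map_one]
  have p312c : perm312 k V Ψ * perm312 k V Φ = 1 := by rw [← map_mul, hΨ, map_one]
  have p132c : perm132 k V Φ * perm132 k V Ψ = 1 := by rw [← map_mul, hΦ, map_one]
  -- Step A : apply `swap12` to the first hexagon
  have hA := congrArg (swap12 k V) hhex1
  rw [swap12_deltaLeft Δ R Rinv hop R, hhex1] at hA
  simp only [map_mul] at hA
  rw [swap12_perm312, swap12_emb13, swap12_perm132, swap12_emb23] at hA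
  -- hA : emb12 R * RHS1 * emb12 Rinv = rev3 Φ * emb23 R * perm231 Ψ * emb13 R * swap12 Φ
  -- Step B : apply `rev3` to the first hexagon
  have hB := congrArg (rev3 k V) hhex1
  rw [rev3_deltaLeft Δ R Rinv hop R, hσR] at hB
  simp only [map_mul] at hB
  rw [rev3_perm312, rev3_emb13, rev3_perm132, rev3_emb23, hσR] at hB
  -- hB : emb23 R * deltaRight Δ Rinv * emb23 Rinv
  --        = perm132 Φ * emb13 Rinv * perm312 Ψ * emb12 Rinv * rev3 Φ
  have hDRinv : deltaRight k V Δ Rinv =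
      emb23 k V Rinv *
        (perm132 k V Φ * emb13 k V Rinv * perm312 k V Ψ * emb12 k V Rinv * rev3 k V Φ) *
        emb23 k V R := conj_eq' e23c hB
  -- the rearranged step A, with a trailing factor
  have hAt : ∀ t : V ⊗[k] (V ⊗[k] V),
      rev3 k V Φ * (emb23 k V R * (perm231 k V Ψ * (emb13 k V R * (swap12 k V Φ * t)))) =
      emb12 k V R * (perm312 k V Φ * (emb13 k V R * (perm132 k V Ψ *
        (emb23 k V R * (Φ * (emb12 k V Rinv * t)))))) := by
    intro t
    have h := congrArg (fun x => x * t) hA.symm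
    simp only [mul_assoc] at h
    exact h
  -- second hexagon, in the form `(1⊗Δ)(R⁻¹) * RHS₂ = 1`
  have hDT : deltaRight k V Δ Rinv *
      (perm231 k V Ψ * emb13 k V R * swap12 k V Φ * emb12 k V R * Ψ) = 1 := by
    rw [hDRinv]
    simp only [mul_assoc]
    rw [hAt (emb12 k V R * Ψ)]
    rw [mul_cancel_left' e12c, mul_cancel_left' p312c, mul_cancel_left' e13c,
      mul_cancel_left' p132c, mul_cancel_left' e23c, mul_cancel_left' e12c, hΦ]
  -- conclude
  have hone : deltaRight k V Δ R * deltaRight k V Δ Rinv = 1 := by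
    rw [← map_mul, hR, map_one]
  show deltaRight k V Δ R =
      perm231 k V Ψ * emb13 k V R * swap12 k V Φ * emb12 k V R * Ψ
  calc deltaRight k V Δ R
      = deltaRight k V Δ R * (deltaRight k V Δ Rinv *
          (perm231 k V Ψ * emb13 k V R * swap12 k V Φ * emb12 k V R * Ψ)) := by
        rw [hDT, mul_one]
    _ = (deltaRight k V Δ R * deltaRight k V Δ Rinv) *
          (perm231 k V Ψ * emb13 k V R * swap12 k V Φ * emb12 k V R * Ψ) :=
        (mul_assoc _ _ _).symm
    _ = perm231 k V Ψ * emb13 k V R * swap12 k V Φ * emb12 k V R * Ψ := by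
        rw [hone, one_mul]

end
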